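/- Let r ≥ 2 be an integer, let λ > 0 and a > 0 be real numbers, and define f : ℝ → ℝ by f(x) = λ·x^r/r! + a. Set b_c = (1 - 1/r)·((r-1)!/λ)^{1/(r-1)}. Then f has a nonnegative fixed point (some x ≥ 0 with f(x) = x) if and only if a ≤ b_c; moreover, when a ≤ b_c there is a fixed point x with a ≤ x ≤ ((r-1)!/λ)^{1/(r-1)}. -/

import Mathlib

open Filter

/-- The critical value `b_c = (1 - 1/r) · ((r-1)!/λ)^(1/(r-1))` for the one-step
infection recursion `f(x) = λ x^r / r! + a` of bootstrap percolation. -/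
noncomputable def bcrit (r : ℕ) (lam : ℝ) : ℝ :=
  (1 - 1 / (r : ℝ)) * (((r - 1).factorial : ℝ) / lam) ^ ((1 : ℝ) / ((r : ℝ) - 1))

/-- **Fixed points of the infection recursion.** For `f(x) = λ x^r / r! + a` with
`λ, a > 0`, `f` has a nonnegative fixed point iff `a ≤ b_c = (1 - 1/r)((r-1)!/λ)^(1/(r-1))`;
moreover when `a ≤ b_c` there is a fixed point `x` with `a ≤ x ≤ ((r-1)!/λ)^(1/(r-1))`. -/
theorem infection_recursion_fixed_point
    (r : ℕ) (hr : 2 ≤ r) (lam a : ℝ) (hlam : 0 < lam) (ha : 0 < a) :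
    ((∃ x : ℝ, 0 ≤ x ∧ lam * x ^ r / (r.factorial : ℝ) + a = x) ↔ a ≤ bcrit r lam) ∧
    (a ≤ bcrit r lam →
      ∃ x : ℝ, lam * x ^ r / (r.factorial : ℝ) + a = x ∧ a ≤ x ∧
        x ≤ (((r - 1).factorial : ℝ) / lam) ^ ((1 : ℝ) / ((r : ℝ) - 1))) := by
  have hr1 : 1 ≤ r := by omega
  have hrR : (1:ℝ) < (r:ℝ) := by exact_mod_cast hr.trans_lt' one_lt_two
  have hrR0 : (0:ℝ) < (r:ℝ) := by linarith
  set n := r - 1 with hn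
  have hnr : n + 1 = r := by omega
  have hncast : ((n:ℝ)) = (r:ℝ) - 1 := by
    rw [hn, Nat.cast_sub hr1, Nat.cast_one]
  have hA : (0:ℝ) < (n.factorial : ℝ) / lam :=
    div_pos (by exact_mod_cast n.factorial_pos) hlam
  set X : ℝ := ((n.factorial : ℝ) / lam) ^ ((1 : ℝ) / ((r : ℝ) - 1)) with hXdef
  have hXpos : 0 < X := Real.rpow_pos_of_pos hA _
  have hXn : X ^ n = (n.factorial : ℝ) / lam := by
    rw [hXdef, ← Real.rpow_natCast (((n.factorial : ℝ) / lam) ^ ((1 : ℝ) / ((r : ℝ) - 1))) n,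
      ← Real.rpow_mul hA.le]
    rw [hncast]
    rw [one_div_mul_cancel (by linarith), Real.rpow_one]
  have hfact : (r.factorial : ℝ) = (r:ℝ) * (n.factorial : ℝ) := by
    rw [hn, ← Nat.mul_factorial_pred (by omega : r ≠ 0)]
    push_cast; ring
  have hfpos : (0:ℝ) < (r.factorial : ℝ) := by exact_mod_cast r.factorial_pos
  have hcXn : lam / (r.factorial : ℝ) * X ^ n = 1 / (r:ℝ) := by
    rw [hXn, hfact]
    field_simp
  have hcXr : lam * X ^ r / (r.factorial : ℝ) = X / (r:ℝ) := by
    calc lam * X ^ r / (r.factorial : ℝ)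
        = (lam / (r.factorial : ℝ) * X ^ n) * X := by
          rw [← hnr, pow_succ]; ring
      _ = 1 / (r:ℝ) * X := by rw [hcXn]
      _ = X / (r:ℝ) := by ring
  have hbc : bcrit r lam = X - X / (r:ℝ) := by
    show (1 - 1 / (r : ℝ)) * X = X - X / (r:ℝ)
    ring
  have hkey : ∀ x : ℝ, 0 ≤ x →
      x - lam * x ^ r / (r.factorial : ℝ) ≤ X - X / (r:ℝ) := by
    intro x hx
    set t := x / X with htdef
    have hxe : x = t * X := by
      rw [htdef]; field_simp
    have hb : 1 + (r:ℝ) * (t - 1) ≤ t ^ r := by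
      have := one_add_mul_le_pow (by
        have ht : 0 ≤ t := div_nonneg hx hXpos.le
        linarith : (-2:ℝ) ≤ t - 1) r
      simpa using this
    have hxr : lam * x ^ r / (r.factorial : ℝ) = t ^ r * (X / (r:ℝ)) := by
      rw [hxe, mul_pow]
      calc lam * (t ^ r * X ^ r) / (r.factorial : ℝ)
          = t ^ r * (lam * X ^ r / (r.factorial : ℝ)) := by ring
        _ = t ^ r * (X / (r:ℝ)) := by rw [hcXr]
    rw [hxr, hxe]
    have h2 : (1 + (r:ℝ) * (t - 1)) * (X / (r:ℝ)) ≤ t ^ r * (X / (r:ℝ)) :=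
      mul_le_mul_of_nonneg_right hb (by positivity)
    have h3 : (1 + (r:ℝ) * (t - 1)) * (X / (r:ℝ)) = X / (r:ℝ) + t * X - X := by
      field_simp; ring
    linarith
  constructor
  · constructor
    · rintro ⟨x, hx, hfx⟩
      rw [hbc]
      have := hkey x hx
      linarith
    · intro hab
      obtain ⟨x, hfx, hax, hxX⟩ : ∃ x : ℝ, lam * x ^ r / (r.factorial : ℝ) + a = x ∧
          a ≤ x ∧ x ≤ X := by
        have hF : ContinuousOn (fun x : ℝ => lam * x ^ r / (r.factorial : ℝ) + a - x)
            (Set.Icc 0 X) := by fun_prop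
        have hsub := intermediate_value_Icc' (le_of_lt hXpos) hF
        have hmem : (0:ℝ) ∈ Set.Icc
            ((fun x : ℝ => lam * x ^ r / (r.factorial : ℝ) + a - x) X)
            ((fun x : ℝ => lam * x ^ r / (r.factorial : ℝ) + a - x) 0) := by
          constructor
          · simp only
            rw [hcXr]
            rw [hbc] at hab
            linarith
          · simp only
            have : lam * (0:ℝ) ^ r / (r.factorial : ℝ) = 0 := by
              rw [zero_pow (by omega : r ≠ 0)]; ring
            rw [this]
            linarith
        obtain ⟨x, hxmem, hx0⟩ := hsub hmem
        simp only at hx0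
        have hfix : lam * x ^ r / (r.factorial : ℝ) + a = x := by linarith
        refine ⟨x, hfix, ?_, hxmem.2⟩
        have hxr0 : 0 ≤ lam * x ^ r / (r.factorial : ℝ) := by
          apply div_nonneg _ hfpos.le
          exact mul_nonneg hlam.le (pow_nonneg hxmem.1 r)
        linarith
      exact ⟨x, ⟨(ha.le.trans hax), hfx⟩⟩
  · intro hab
    obtain ⟨x, hfx, hax, hxX⟩ : ∃ x : ℝ, lam * x ^ r / (r.factorial : ℝ) + a = x ∧
        a ≤ x ∧ x ≤ X := by
      have hF : ContinuousOn (fun x : ℝ => lam * x ^ r / (r.factorial : ℝ) + a - x)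
          (Set.Icc 0 X) := by fun_prop
      have hsub := intermediate_value_Icc' (le_of_lt hXpos) hF
      have hmem : (0:ℝ) ∈ Set.Icc
          ((fun x : ℝ => lam * x ^ r / (r.factorial : ℝ) + a - x) X)
          ((fun x : ℝ => lam * x ^ r / (r.factorial : ℝ) + a - x) 0) := by
        constructor
        · simp only
          rw [hcXr]
          rw [hbc] at hab
          linarith
        · simp only
          have : lam * (0:ℝ) ^ r / (r.factorial : ℝ) = 0 := by
            rw [zero_pow (by omega : r ≠ 0)]; ring
          rw [this]
          linarith
      obtain ⟨x, hxmem, hx0⟩ := hsub hmem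
      simp only at hx0
      have hfix : lam * x ^ r / (r.factorial : ℝ) + a = x := by linarith
      refine ⟨x, hfix, ?_, hxmem.2⟩
      have hxr0 : 0 ≤ lam * x ^ r / (r.factorial : ℝ) := by
        apply div_nonneg _ hfpos.le
        exact mul_nonneg hlam.le (pow_nonneg hxmem.1 r)
      linarith
    exact ⟨x, hfx, hax, hxX⟩
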